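/- arXiv:1106.4361 — 2 statements merged into one kernel-verified Lean document; each statement's English description precedes it below -/
import Mathlib

section
/- (Graded-uniqueness theorem.) Let k be a positive integer, Λ a row-finite k-graph without sources, R a commutative ring with 1, and A a ℤ^k-graded ring. If π : KP_R(Λ) → A is a ℤ^k-graded ring homomorphism such that π(rp_v) ≠ 0 for all r ∈ R∖{0} and all v ∈ Λ^0, then π is injective. -/
namespace KP

/-- A `k`-graph: a nonempty countable small category `Λ` together with a degree
functor `d : Λ → ℕ^k` satisfying the unique factorization property.  Objects
(vertices) are identified with identity morphisms via `ident`.  The composition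
`comp l m` is only meaningful when `s l = r m`. -/
structure KGraph (k : ℕ) where
  V : Type
  E : Type
  nonemptyV : Nonempty V
  countableE : Countable E
  r : E → V
  s : E → V
  d : E → Fin k → ℕ
  ident : V → E
  comp : E → E → E
  r_ident : ∀ v, r (ident v) = v
  s_ident : ∀ v, s (ident v) = v
  d_ident : ∀ v, d (ident v) = 0
  r_comp : ∀ ⦃l m : E⦄, s l = r m → r (comp l m) = r l
  s_comp : ∀ ⦃l m : E⦄, s l = r m → s (comp l m) = s m
  d_comp : ∀ ⦃l m : E⦄, s l = r m → d (comp l m) = d l + d m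
  comp_assoc : ∀ ⦃l m n : E⦄, s l = r m → s m = r n →
    comp (comp l m) n = comp l (comp m n)
  ident_comp : ∀ l : E, comp (ident (r l)) l = l
  comp_ident : ∀ l : E, comp l (ident (s l)) = l
  eq_ident_of_d_eq_zero : ∀ l : E, d l = 0 → l = ident (r l)
  factor : ∀ (l : E) (m n : Fin k → ℕ), d l = m + n →
    ∃! p : E × E, d p.1 = m ∧ d p.2 = n ∧ s p.1 = r p.2 ∧ comp p.1 p.2 = l

namespace KGraph

variable {k : ℕ}

/-- `Λ` is row-finite if every `vΛ^n` is finite. -/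
def RowFinite (Λ : KGraph k) : Prop :=
  ∀ (v : Λ.V) (n : Fin k → ℕ), {l : Λ.E | Λ.r l = v ∧ Λ.d l = n}.Finite

/-- `Λ` has no sources if every `vΛ^n` is nonempty. -/
def NoSources (Λ : KGraph k) : Prop :=
  ∀ (v : Λ.V) (n : Fin k → ℕ), ∃ l : Λ.E, Λ.r l = v ∧ Λ.d l = n

/-- `H ⊆ Λ^0` is hereditary if `r(l) ∈ H` implies `s(l) ∈ H`. -/
def HereditarySet (Λ : KGraph k) (H : Set Λ.V) : Prop :=
  ∀ l : Λ.E, Λ.r l ∈ H → Λ.s l ∈ H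

/-- `H ⊆ Λ^0` is saturated if `s(vΛ^n) ⊆ H` implies `v ∈ H`. -/
def SaturatedSet (Λ : KGraph k) (H : Set Λ.V) : Prop :=
  ∀ (v : Λ.V) (n : Fin k → ℕ),
    (∀ l : Λ.E, Λ.r l = v → Λ.d l = n → Λ.s l ∈ H) → v ∈ H

open Classical in
/-- The segment `l(p,q)` of a path `l`: the unique middle factor in a
factorization `l = l'l''l'''` with `d l' = p` and `d l'' = q - p` (when `p ≤ q ≤ d l`). -/
noncomputable def seg (Λ : KGraph k) (l : Λ.E) (p q : Fin k → ℕ) : Λ.E :=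
  if h : ∃ t : Λ.E × Λ.E × Λ.E, Λ.d t.1 = p ∧ Λ.d t.2.1 = q - p ∧
      Λ.s t.1 = Λ.r t.2.1 ∧ Λ.s t.2.1 = Λ.r t.2.2 ∧
      Λ.comp t.1 (Λ.comp t.2.1 t.2.2) = l
  then (Classical.choose h).2.1 else l

/-- Aperiodicity in the finite-path formulation of Robertson and Sims. -/
def Aperiodic (Λ : KGraph k) : Prop :=
  ∀ (v : Λ.V) (m n : Fin k → ℕ), m ≠ n →
    ∃ l : Λ.E, Λ.r l = v ∧ m ⊔ n ≤ Λ.d l ∧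
      Λ.seg l m (m + Λ.d l - m ⊔ n) ≠ Λ.seg l n (n + Λ.d l - m ⊔ n)

end KGraph

/-- An infinite path in `Λ`: a degree-preserving functor `x : Ω_k → Λ`,
recorded by its segments `x.f p q = x(p,q)` for `p ≤ q`. -/
structure InfPath {k : ℕ} (Λ : KGraph k) where
  f : (Fin k → ℕ) → (Fin k → ℕ) → Λ.E
  deg : ∀ p q : Fin k → ℕ, p ≤ q → Λ.d (f p q) = q - p
  compat : ∀ p q u : Fin k → ℕ, p ≤ q → q ≤ u → Λ.s (f p q) = Λ.r (f q u)
  comp_f : ∀ p q u : Fin k → ℕ, p ≤ q → q ≤ u → Λ.comp (f p q) (f q u) = f p u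

/-- The vertex `x(n)` of an infinite path. -/
def InfPath.vtx {k : ℕ} {Λ : KGraph k} (x : InfPath Λ) (n : Fin k → ℕ) : Λ.V :=
  Λ.r (x.f n n)

/-- `Λ` is cofinal if for every infinite path `x` and vertex `v` there is `n`
with `vΛx(n)` nonempty. -/
def KGraph.Cofinal {k : ℕ} (Λ : KGraph k) : Prop :=
  ∀ (x : InfPath Λ) (v : Λ.V), ∃ (n : Fin k → ℕ) (l : Λ.E),
    Λ.r l = v ∧ Λ.s l = x.vtx n

/-- A Kumjian-Pask `Λ`-family in a ring `A`.  `P v = P_v`, `S l = S_l` and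
`S' l = S_{l*}`; by convention `S` and `S'` are extended to vertices (paths of
degree `0`) by `S_v = S_{v*} = P_v`. -/
structure KPFamily {k : ℕ} (Λ : KGraph k) (A : Type) [Ring A] where
  P : Λ.V → A
  S : Λ.E → A
  S' : Λ.E → A
  S_ident : ∀ v, S (Λ.ident v) = P v
  S'_ident : ∀ v, S' (Λ.ident v) = P v
  idem : ∀ v, P v * P v = P v
  orth : ∀ v w, v ≠ w → P v * P w = 0
  mul_S : ∀ ⦃l m : Λ.E⦄, Λ.d l ≠ 0 → Λ.d m ≠ 0 → Λ.s l = Λ.r m →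
    S l * S m = S (Λ.comp l m)
  mul_S' : ∀ ⦃l m : Λ.E⦄, Λ.d l ≠ 0 → Λ.d m ≠ 0 → Λ.s l = Λ.r m →
    S' m * S' l = S' (Λ.comp l m)
  P_mul_S : ∀ l : Λ.E, Λ.d l ≠ 0 → P (Λ.r l) * S l = S l
  S_mul_P : ∀ l : Λ.E, Λ.d l ≠ 0 → S l * P (Λ.s l) = S l
  P_mul_S' : ∀ l : Λ.E, Λ.d l ≠ 0 → P (Λ.s l) * S' l = S' l
  S'_mul_P : ∀ l : Λ.E, Λ.d l ≠ 0 → S' l * P (Λ.r l) = S' l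
  KP3_eq : ∀ l : Λ.E, Λ.d l ≠ 0 → S' l * S l = P (Λ.s l)
  KP3_ne : ∀ l m : Λ.E, Λ.d l ≠ 0 → Λ.d l = Λ.d m → l ≠ m → S' l * S m = 0
  KP4 : ∀ (v : Λ.V) (n : Fin k → ℕ), n ≠ 0 → ∀ F : Finset Λ.E,
    (∀ l : Λ.E, l ∈ F ↔ Λ.r l = v ∧ Λ.d l = n) →
    P v = ∑ l ∈ F, S l * S' l

/-- The Kumjian-Pask algebra of `Λ` with coefficients in `R`: an `R`-algebra
`A` together with a generating Kumjian-Pask family `(p,s)` which is universal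
for Kumjian-Pask `Λ`-families, carries a `ℤ^k`-grading with the prescribed
homogeneous components, and in which `r • p_v ≠ 0` for `r ≠ 0`. -/
structure KPAlgebra {k : ℕ} (Λ : KGraph k) (R : Type) [CommRing R]
    (A : Type) [Ring A] [Algebra R A] where
  fam : KPFamily Λ A
  universal : ∀ (B : Type) [Ring B] [Algebra R B] (QT : KPFamily Λ B),
    ∃! φ : A →ₐ[R] B,
      (∀ v, φ (fam.P v) = QT.P v) ∧
      (∀ l, Λ.d l ≠ 0 → φ (fam.S l) = QT.S l) ∧
      (∀ l, Λ.d l ≠ 0 → φ (fam.S' l) = QT.S' l)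
  grading : (Fin k → ℤ) → AddSubgroup A
  grading_mul : ∀ (m n : Fin k → ℤ), ∀ a ∈ grading m, ∀ b ∈ grading n,
    a * b ∈ grading (m + n)
  grading_internal : DirectSum.IsInternal grading
  grading_eq : ∀ n : Fin k → ℤ, (grading n : Set A) =
    ↑(Submodule.span R {x : A | ∃ l m : Λ.E,
      (fun i => (Λ.d l i : ℤ) - (Λ.d m i : ℤ)) = n ∧ x = fam.S l * fam.S' m})
  smul_P_ne_zero : ∀ (v : Λ.V) (c : R), c ≠ 0 → c • fam.P v ≠ 0

/-- A `G`-grading on a ring `A`: additive subgroups with `A_g A_h ⊆ A_{g+h}`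
such that `A` is their internal direct sum. -/
def IsGrading {G A : Type} [AddCommGroup G] [DecidableEq G] [Ring A]
    (gr : G → AddSubgroup A) : Prop :=
  (∀ g h : G, ∀ a ∈ gr g, ∀ b ∈ gr h, a * b ∈ gr (g + h)) ∧
  DirectSum.IsInternal gr

/-- An ideal `I` is graded when every element of `I` is a sum of homogeneous
elements of `I`, i.e. `I = Σ_g (I ∩ A_g)`. -/
def IsGradedIdeal {G A : Type} [Ring A] (gr : G → AddSubgroup A)
    (I : TwoSidedIdeal A) : Prop :=
  ∀ x ∈ I, x ∈ AddSubgroup.closure {y : A | y ∈ I ∧ ∃ g : G, y ∈ gr g}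

/-- An ideal `I` of `KP_R(Λ)` is basic if `c • p_v ∈ I` with `c ≠ 0` implies `p_v ∈ I`. -/
def IsBasic {k : ℕ} {Λ : KGraph k} {R : Type} [CommRing R]
    {A : Type} [Ring A] [Algebra R A] (KP : KPAlgebra Λ R A)
    (I : TwoSidedIdeal A) : Prop :=
  ∀ (c : R) (v : Λ.V), c ≠ 0 → c • KP.fam.P v ∈ I → KP.fam.P v ∈ I

/-- An ideal is idempotent if it is spanned by products `a * b` with `a, b ∈ I`. -/
def IsIdempotentIdeal {A : Type} [Ring A] (I : TwoSidedIdeal A) : Prop :=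
  (I : Set A) ⊆ ↑(AddSubgroup.closure {x : A | ∃ a ∈ I, ∃ b ∈ I, x = a * b})

/-- `RestrCompat Λ H Λ' eV eE` asserts that `Λ'` is (a realization of) the
subgraph `Λ∖H = (Λ^0∖H, {l ∈ Λ : s(l) ∉ H}, r, s)` with the restricted
structure maps, the identifications being given by the equivalences `eV`, `eE`. -/
def RestrCompat {k : ℕ} (Λ : KGraph k) (H : Set Λ.V) (Λ' : KGraph k)
    (eV : Λ'.V ≃ {v : Λ.V // v ∉ H}) (eE : Λ'.E ≃ {l : Λ.E // Λ.s l ∉ H}) : Prop :=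
  (∀ l : Λ'.E, (eV (Λ'.r l)).1 = Λ.r (eE l).1) ∧
  (∀ l : Λ'.E, (eV (Λ'.s l)).1 = Λ.s (eE l).1) ∧
  (∀ l : Λ'.E, Λ'.d l = Λ.d (eE l).1) ∧
  (∀ v : Λ'.V, (eE (Λ'.ident v)).1 = Λ.ident (eV v).1) ∧
  (∀ l m : Λ'.E, Λ'.s l = Λ'.r m →
    (eE (Λ'.comp l m)).1 = Λ.comp (eE l).1 (eE m).1)

/-- `Ind M`: the ideal of `KP_R(Λ)` induced by a set (ideal) `M` of coefficients,
`Ind M = span_R {c • s_a s_{b*} : c ∈ M, a b ∈ Λ}`. -/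
def IndSpan {k : ℕ} {Λ : KGraph k} {R : Type} [CommRing R]
    {A : Type} [Ring A] [Algebra R A] (KP : KPAlgebra Λ R A) (M : Set R) :
    Submodule R A :=
  Submodule.span R {x : A | ∃ c ∈ M, ∃ a b : Λ.E, x = c • (KP.fam.S a * KP.fam.S' b)}

/-- `Res I = {c ∈ R : c • p_v ∈ I for all v ∈ Λ^0}`. -/
def ResSet {k : ℕ} {Λ : KGraph k} {R : Type} [CommRing R]
    {A : Type} [Ring A] [Algebra R A] (KP : KPAlgebra Λ R A) (I : Set A) : Set R :=
  {c : R | ∀ v : Λ.V, c • KP.fam.P v ∈ I}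


section Helpers

variable {k : ℕ} {Λ : KGraph k} {A : Type} [Ring A] (f : KPFamily Λ A)

lemma s_eq_r_of_d_zero {l : Λ.E} (h : Λ.d l = 0) : Λ.s l = Λ.r l := by
  conv_lhs => rw [Λ.eq_ident_of_d_eq_zero l h]
  rw [Λ.s_ident]

lemma S_eq_P {l : Λ.E} (h : Λ.d l = 0) : f.S l = f.P (Λ.r l) := by
  conv_lhs => rw [Λ.eq_ident_of_d_eq_zero l h]
  rw [f.S_ident]

lemma S'_eq_P {l : Λ.E} (h : Λ.d l = 0) : f.S' l = f.P (Λ.r l) := by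
  conv_lhs => rw [Λ.eq_ident_of_d_eq_zero l h]
  rw [f.S'_ident]

lemma P_mul_S_all (l : Λ.E) : f.P (Λ.r l) * f.S l = f.S l := by
  by_cases h : Λ.d l = 0
  · rw [S_eq_P f h, f.idem]
  · exact f.P_mul_S l h

lemma S_mul_P_all (l : Λ.E) : f.S l * f.P (Λ.s l) = f.S l := by
  by_cases h : Λ.d l = 0
  · rw [S_eq_P f h, s_eq_r_of_d_zero h, f.idem]
  · exact f.S_mul_P l h

lemma P_mul_S'_all (l : Λ.E) : f.P (Λ.s l) * f.S' l = f.S' l := by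
  by_cases h : Λ.d l = 0
  · rw [S'_eq_P f h, s_eq_r_of_d_zero h, f.idem]
  · exact f.P_mul_S' l h

lemma S'_mul_P_all (l : Λ.E) : f.S' l * f.P (Λ.r l) = f.S' l := by
  by_cases h : Λ.d l = 0
  · rw [S'_eq_P f h, f.idem]
  · exact f.S'_mul_P l h

lemma mul_S_all {l m : Λ.E} (h : Λ.s l = Λ.r m) :
    f.S l * f.S m = f.S (Λ.comp l m) := by
  by_cases hl : Λ.d l = 0
  · have hl' : l = Λ.ident (Λ.r l) := Λ.eq_ident_of_d_eq_zero l hl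
    have hr : Λ.r l = Λ.r m := by rw [← h, s_eq_r_of_d_zero hl]
    rw [hl', hr, Λ.ident_comp m, f.S_ident, P_mul_S_all]
  · by_cases hm : Λ.d m = 0
    · have hm' : m = Λ.ident (Λ.r m) := Λ.eq_ident_of_d_eq_zero m hm
      have hr : Λ.r m = Λ.s l := h.symm
      rw [hm', hr, Λ.comp_ident l, f.S_ident, S_mul_P_all]
    · exact f.mul_S hl hm h

lemma mul_S'_all {l m : Λ.E} (h : Λ.s l = Λ.r m) :
    f.S' m * f.S' l = f.S' (Λ.comp l m) := by
  by_cases hl : Λ.d l = 0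
  · have hl' : l = Λ.ident (Λ.r l) := Λ.eq_ident_of_d_eq_zero l hl
    have hr : Λ.r l = Λ.r m := by rw [← h, s_eq_r_of_d_zero hl]
    rw [hl', hr, Λ.ident_comp m, f.S'_ident, S'_mul_P_all]
  · by_cases hm : Λ.d m = 0
    · have hm' : m = Λ.ident (Λ.r m) := Λ.eq_ident_of_d_eq_zero m hm
      have hr : Λ.r m = Λ.s l := h.symm
      rw [hm', hr, Λ.comp_ident l, f.S'_ident, P_mul_S'_all]
    · exact f.mul_S' hl hm h

lemma ident_inj {v w : Λ.V} (h : Λ.ident v = Λ.ident w) : v = w := by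
  have := congrArg Λ.r h
  rwa [Λ.r_ident, Λ.r_ident] at this

open Classical in
lemma KP3_all {l m : Λ.E} (h : Λ.d l = Λ.d m) :
    f.S' l * f.S m = if l = m then f.P (Λ.s l) else 0 := by
  by_cases hlm : l = m
  · subst hlm
    rw [if_pos rfl]
    by_cases hl : Λ.d l = 0
    · rw [S'_eq_P f hl, S_eq_P f hl, f.idem, s_eq_r_of_d_zero hl]
    · exact f.KP3_eq l hl
  · rw [if_neg hlm]
    by_cases hl : Λ.d l = 0
    · have hm : Λ.d m = 0 := by rw [← h]; exact hl
      have hrne : Λ.r l ≠ Λ.r m := by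
        intro hr
        apply hlm
        rw [Λ.eq_ident_of_d_eq_zero l hl, Λ.eq_ident_of_d_eq_zero m hm, hr]
      rw [S'_eq_P f hl, S_eq_P f hm, f.orth _ _ hrne]
    · exact f.KP3_ne l m hl h hlm

lemma S_mul_S'_zero {l m : Λ.E} (h : Λ.s l ≠ Λ.s m) :
    f.S l * f.S' m = 0 := by
  rw [← S_mul_P_all f l, ← P_mul_S'_all f m, mul_assoc, ← mul_assoc (f.P (Λ.s l)),
    f.orth _ _ h, zero_mul, mul_zero]

lemma extend {l m : Λ.E} (hs : Λ.s l = Λ.s m) (e : Fin k → ℕ) (he : e ≠ 0)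
    (F : Finset Λ.E) (hF : ∀ η : Λ.E, η ∈ F ↔ Λ.r η = Λ.s l ∧ Λ.d η = e) :
    f.S l * f.S' m = ∑ η ∈ F, f.S (Λ.comp l η) * f.S' (Λ.comp m η) := by
  have h1 : f.P (Λ.s l) = ∑ η ∈ F, f.S η * f.S' η := f.KP4 _ e he F hF
  calc f.S l * f.S' m = f.S l * f.P (Λ.s l) * f.S' m := by rw [S_mul_P_all]
    _ = f.S l * (∑ η ∈ F, f.S η * f.S' η) * f.S' m := by rw [← h1]
    _ = ∑ η ∈ F, f.S l * (f.S η * f.S' η) * f.S' m := by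
          rw [Finset.mul_sum, Finset.sum_mul]
    _ = ∑ η ∈ F, f.S (Λ.comp l η) * f.S' (Λ.comp m η) := by
          refine Finset.sum_congr rfl fun η hη => ?_
          obtain ⟨hr, _⟩ := (hF η).1 hη
          have h2 : Λ.s l = Λ.r η := hr.symm
          have h3 : Λ.s m = Λ.r η := by rw [← hs]; exact h2
          rw [← mul_S_all f h2, ← mul_S'_all f h3, mul_assoc, mul_assoc, mul_assoc]

end Helpers

set_option maxHeartbeats 1600000 in
set_option synthInstance.maxHeartbeats 400000 in
/-- **Theorem 4.1 (the graded-uniqueness theorem).**  Let `Λ` be a row-finite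
`k`-graph without sources, `R` a commutative ring with `1`, and `B` a
`ℤ^k`-graded ring.  If `π : KP_R(Λ) → B` is a `ℤ^k`-graded ring homomorphism
such that `π (c • p_v) ≠ 0` for all `c ∈ R∖{0}` and `v ∈ Λ^0`, then `π` is
injective. -/
theorem graded_uniqueness (k : ℕ) (hk : 0 < k) (Λ : KGraph k)
    (hrf : Λ.RowFinite) (hns : Λ.NoSources)
    (R : Type) [CommRing R] (A : Type) [Ring A] [Algebra R A]
    (KP : KPAlgebra Λ R A)
    (B : Type) [Ring B] (grB : (Fin k → ℤ) → AddSubgroup B)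
    (hgrB : IsGrading grB)
    (π : A →+* B)
    (hgraded : ∀ (n : Fin k → ℤ), ∀ a ∈ KP.grading n, π a ∈ grB n)
    (hv : ∀ (c : R) (v : Λ.V), c ≠ 0 → π (c • KP.fam.P v) ≠ 0) :
    Function.Injective π := by
  classical
  -- Step 1: homogeneous elements of the kernel vanish.
  have key : ∀ (n : Fin k → ℤ) (x : A), x ∈ KP.grading n → π x = 0 → x = 0 := by
    intro n x hx hπx
    have hx' : x ∈ Submodule.span R {y : A | ∃ l m : Λ.E,
        (fun i => (Λ.d l i : ℤ) - (Λ.d m i : ℤ)) = n ∧ y = KP.fam.S l * KP.fam.S' m} := by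
      have hmem : x ∈ (KP.grading n : Set A) := hx
      rw [KP.grading_eq n] at hmem
      exact hmem
    rw [Submodule.mem_span_set'] at hx'
    obtain ⟨t, c, g, hsum⟩ := hx'
    choose lam mu hd hg using fun i : Fin t => (g i).2
    set T0 : Finset (Fin t) :=
      Finset.univ.filter (fun i => Λ.s (lam i) = Λ.s (mu i)) with hT0
    have hx1 : x = ∑ i ∈ T0, c i • (KP.fam.S (lam i) * KP.fam.S' (mu i)) := by
      rw [hT0, Finset.sum_filter, ← hsum]
      refine Finset.sum_congr rfl fun i _ => ?_
      by_cases h : Λ.s (lam i) = Λ.s (mu i)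
      · rw [if_pos h, hg i]
      · rw [if_neg h, hg i, S_mul_S'_zero _ h, smul_zero]
    -- common degree
    set N : Fin k → ℕ := fun j =>
      1 + Finset.univ.sup (fun i : Fin t => max (Λ.d (lam i) j) (Λ.d (mu i) j)) with hNdef
    have hNlam : ∀ (i : Fin t) (j : Fin k), Λ.d (lam i) j + 1 ≤ N j := by
      intro i j
      have h1 : max (Λ.d (lam i) j) (Λ.d (mu i) j) ≤
          Finset.univ.sup (fun i : Fin t => max (Λ.d (lam i) j) (Λ.d (mu i) j)) :=
        Finset.le_sup (f := fun i : Fin t => max (Λ.d (lam i) j) (Λ.d (mu i) j))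
          (Finset.mem_univ i)
      have h2 := le_max_left (Λ.d (lam i) j) (Λ.d (mu i) j)
      have h3 : N j = 1 + Finset.univ.sup
          (fun i : Fin t => max (Λ.d (lam i) j) (Λ.d (mu i) j)) := rfl
      omega
    have hNmu : ∀ (i : Fin t) (j : Fin k), Λ.d (mu i) j + 1 ≤ N j := by
      intro i j
      have h1 : max (Λ.d (lam i) j) (Λ.d (mu i) j) ≤
          Finset.univ.sup (fun i : Fin t => max (Λ.d (lam i) j) (Λ.d (mu i) j)) :=
        Finset.le_sup (f := fun i : Fin t => max (Λ.d (lam i) j) (Λ.d (mu i) j))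
          (Finset.mem_univ i)
      have h2 := le_max_right (Λ.d (lam i) j) (Λ.d (mu i) j)
      have h3 : N j = 1 + Finset.univ.sup
          (fun i : Fin t => max (Λ.d (lam i) j) (Λ.d (mu i) j)) := rfl
      omega
    set M : Fin k → ℕ := fun j => ((N j : ℤ) - n j).toNat with hMdef
    set e : Fin t → (Fin k → ℕ) := fun i j => N j - Λ.d (lam i) j with hedef
    have he : ∀ i : Fin t, e i ≠ 0 := by
      intro i h
      have h0 := congrFun h ⟨0, hk⟩
      have h1 := hNlam i ⟨0, hk⟩
      simp only [hedef, Pi.zero_apply] at h0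
      omega
    set F : Fin t → Finset Λ.E := fun i => (hrf (Λ.s (lam i)) (e i)).toFinset with hFdef
    have hFmem : ∀ (i : Fin t) (η : Λ.E),
        η ∈ F i ↔ Λ.r η = Λ.s (lam i) ∧ Λ.d η = e i := by
      intro i η
      rw [hFdef]
      exact Set.Finite.mem_toFinset _
    set T : Finset ((_ : Fin t) × Λ.E) := T0.sigma F with hTdef
    set gmap : ((_ : Fin t) × Λ.E) → Λ.E × Λ.E :=
      fun p => (Λ.comp (lam p.1) p.2, Λ.comp (mu p.1) p.2) with hgmap
    have hx2 : x = ∑ p ∈ T, c p.1 • (KP.fam.S (gmap p).1 * KP.fam.S' (gmap p).2) := by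
      rw [hx1, hTdef, Finset.sum_sigma]
      refine Finset.sum_congr rfl fun i hi => ?_
      have hs : Λ.s (lam i) = Λ.s (mu i) := (Finset.mem_filter.1 hi).2
      rw [extend KP.fam hs (e i) (he i) (F i) (hFmem i), Finset.smul_sum]
    -- facts about pairs in T
    have hfacts : ∀ p ∈ T, Λ.d (gmap p).1 = N ∧ Λ.d (gmap p).2 = M ∧
        Λ.s (gmap p).1 = Λ.s (gmap p).2 := by
      intro p hp
      rw [hTdef, Finset.mem_sigma] at hp
      obtain ⟨hp1, hp2⟩ := hp
      obtain ⟨hr2, hd2⟩ := (hFmem p.1 p.2).1 hp2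
      have hsmu0 : Λ.s (lam p.1) = Λ.s (mu p.1) := (Finset.mem_filter.1 hp1).2
      have hclam : Λ.s (lam p.1) = Λ.r p.2 := hr2.symm
      have hcmu : Λ.s (mu p.1) = Λ.r p.2 := by rw [← hsmu0]; exact hclam
      refine ⟨?_, ?_, ?_⟩
      · funext j
        have h1 := congrFun (Λ.d_comp hclam) j
        have h2 := congrFun hd2 j
        have h3 := hNlam p.1 j
        have h5 : e p.1 j = N j - Λ.d (lam p.1) j := rfl
        simp only [Pi.add_apply] at h1
        show Λ.d (Λ.comp (lam p.1) p.2) j = N j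
        omega
      · funext j
        have h1 := congrFun (Λ.d_comp hcmu) j
        have h2 := congrFun hd2 j
        have h3 := hNlam p.1 j
        have h4 := congrFun (hd p.1) j
        have h5 : e p.1 j = N j - Λ.d (lam p.1) j := rfl
        have h6 : M j = ((N j : ℤ) - n j).toNat := rfl
        simp only [Pi.add_apply] at h1
        show Λ.d (Λ.comp (mu p.1) p.2) j = M j
        omega
      · show Λ.s (Λ.comp (lam p.1) p.2) = Λ.s (Λ.comp (mu p.1) p.2)
        rw [Λ.s_comp hclam, Λ.s_comp hcmu]
    -- regroup the sum over distinct pairs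
    have hx3 : x = ∑ q ∈ T.image gmap,
        (∑ p ∈ T.filter (fun p => gmap p = q), c p.1) •
          (KP.fam.S q.1 * KP.fam.S' q.2) := by
      rw [hx2, ← Finset.sum_fiberwise_of_maps_to
        (fun p hp => Finset.mem_image_of_mem gmap hp)
        (fun p => c p.1 • (KP.fam.S (gmap p).1 * KP.fam.S' (gmap p).2))]
      refine Finset.sum_congr rfl fun q hq => ?_
      rw [Finset.sum_smul]
      refine Finset.sum_congr rfl fun p hp => ?_
      rw [(Finset.mem_filter.1 hp).2]
    -- each grouped coefficient vanishes
    have hC : ∀ q ∈ T.image gmap,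
        (∑ p ∈ T.filter (fun p => gmap p = q), c p.1) = 0 := by
      intro q hq
      have himg : ∀ q' ∈ T.image gmap, Λ.d q'.1 = N ∧ Λ.d q'.2 = M ∧
          Λ.s q'.1 = Λ.s q'.2 := by
        intro q' hq'
        obtain ⟨p, hpT, hpq⟩ := Finset.mem_image.1 hq'
        rw [← hpq]
        exact hfacts p hpT
      obtain ⟨hq1, hq2, hqs⟩ := himg q hq
      set C : R := ∑ p ∈ T.filter (fun p => gmap p = q), c p.1 with hCdef
      have hcomp : KP.fam.S' q.1 * x * KP.fam.S q.2 = C • KP.fam.P (Λ.s q.1) := by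
        rw [hx3, Finset.mul_sum, Finset.sum_mul]
        have hterm : ∀ q' ∈ T.image gmap,
            KP.fam.S' q.1 * ((∑ p ∈ T.filter (fun p => gmap p = q'), c p.1) •
              (KP.fam.S q'.1 * KP.fam.S' q'.2)) * KP.fam.S q.2 =
            (if q' = q then C • KP.fam.P (Λ.s q.1) else 0) := by
          intro q' hq'
          obtain ⟨hq'1, hq'2, hq's⟩ := himg q' hq'
          rw [mul_smul_comm, smul_mul_assoc]
          have hdeg1 : Λ.d q.1 = Λ.d q'.1 := by rw [hq1, hq'1]
          have hdeg2 : Λ.d q'.2 = Λ.d q.2 := by rw [hq2, hq'2]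
          have hre : KP.fam.S' q.1 * (KP.fam.S q'.1 * KP.fam.S' q'.2) * KP.fam.S q.2 =
              (KP.fam.S' q.1 * KP.fam.S q'.1) * (KP.fam.S' q'.2 * KP.fam.S q.2) := by
            simp only [mul_assoc]
          rw [hre, KP3_all KP.fam hdeg1, KP3_all KP.fam hdeg2]
          by_cases hqq : q' = q
          · subst hqq
            rw [if_pos rfl, if_pos rfl, if_pos rfl, ← hCdef]
            rw [hqs, ← hq's, hqs, KP.fam.idem, ← hqs]
          · rcases (Prod.ext_iff.not.mp hqq) with h
            by_cases h1 : q.1 = q'.1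
            · have h2 : q'.2 ≠ q.2 := by
                intro h2; exact hqq (Prod.ext h1.symm h2)
              rw [if_pos h1, if_neg h2, if_neg hqq, mul_zero, smul_zero]
            · rw [if_neg h1, if_neg hqq, zero_mul, smul_zero]
        rw [Finset.sum_congr rfl hterm, Finset.sum_ite_eq' (T.image gmap) q
          (fun _ => C • KP.fam.P (Λ.s q.1)), if_pos hq]
      by_contra hCne
      exact hv C (Λ.s q.1) hCne (by
        rw [← hcomp, map_mul, map_mul, hπx, mul_zero, zero_mul])
    rw [hx3]
    exact Finset.sum_eq_zero fun q hq => by rw [hC q hq, zero_smul]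
  -- Step 2: the kernel is trivial.
  have ker0 : ∀ x : A, π x = 0 → x = 0 := by
    intro x hπx
    obtain ⟨y, rfl⟩ := KP.grading_internal.surjective x
    have hrep : (DirectSum.coeAddMonoidHom KP.grading) y
        = ∑ m ∈ DFinsupp.support y, ((y m : A)) := by
      conv_lhs => rw [← DirectSum.sum_support_of y]
      rw [map_sum]
      exact Finset.sum_congr rfl fun m _ => DirectSum.coeAddMonoidHom_of _ _ _
    set z : DirectSum (Fin k → ℤ) (fun m => grB m) :=
      ∑ m ∈ DFinsupp.support y, DirectSum.of (fun m => grB m) m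
        ⟨π ((y m : A)), hgraded m (y m) (y m).2⟩ with hz
    have hcoez : DirectSum.coeAddMonoidHom grB z = 0 := by
      rw [hz, map_sum]
      have h1 : ∑ m ∈ DFinsupp.support y, (DirectSum.coeAddMonoidHom grB)
            (DirectSum.of (fun m => grB m) m
              ⟨π ((y m : A)), hgraded m (y m) (y m).2⟩)
          = ∑ m ∈ DFinsupp.support y, π ((y m : A)) :=
        Finset.sum_congr rfl fun m _ => DirectSum.coeAddMonoidHom_of _ _ _
      rw [h1, ← map_sum, ← hrep, hπx]
    have hz0 : z = 0 := hgrB.2.injective (by rw [hcoez, map_zero])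
    have hπy : ∀ m ∈ DFinsupp.support y, π ((y m : A)) = 0 := by
      intro m0 hm0
      have h1 : z m0 = ⟨π ((y m0 : A)), hgraded m0 (y m0) (y m0).2⟩ := by
        rw [hz, DFinsupp.finset_sum_apply]
        rw [Finset.sum_eq_single m0 ?_ ?_]
        · exact DirectSum.of_eq_same m0 _
        · intro m _ hne
          exact DirectSum.of_eq_of_ne _ _ _ hne.symm
        · intro h
          exact absurd hm0 h
      have h2 : z m0 = 0 := by rw [hz0]; rfl
      exact congrArg Subtype.val (h1.symm.trans h2)
    rw [hrep]
    exact Finset.sum_eq_zero fun m hm => key m (y m) (y m).2 (hπy m hm)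
  intro a b hab
  have h0 : π (a - b) = 0 := by rw [map_sub, hab, sub_self]
  have := ker0 _ h0
  exact sub_eq_zero.mp this

end KP
end

section
/- Let k be a positive integer, Λ an aperiodic row-finite k-graph without sources, and R a commutative ring with 1. Let x = Σ_{(α,β)∈F} r_{α,β} s_α s_{β*} be a nonzero element of KP_R(Λ) written in normal form. Then there exist σ, τ ∈ Λ, a pair (δ,γ) ∈ F and a vertex w ∈ Λ^0 such that s_{σ*} x s_τ = r_{δ,γ} p_w. -/
namespace KP

section Aux

variable {k : ℕ} {Λ : KGraph k}

namespace KGraph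

lemma s_eq_r_of_d_eq_zero (Λ : KGraph k) {l : Λ.E} (h : Λ.d l = 0) :
    Λ.s l = Λ.r l := by
  conv_lhs => rw [Λ.eq_ident_of_d_eq_zero l h]
  rw [Λ.s_ident]

lemma ident_inj (Λ : KGraph k) {v w : Λ.V} (h : Λ.ident v = Λ.ident w) :
    v = w := by
  have h2 := congrArg Λ.r h
  rwa [Λ.r_ident, Λ.r_ident] at h2

lemma comp_unique (Λ : KGraph k) {a b a' b' : Λ.E} (hab : Λ.s a = Λ.r b)
    (hab' : Λ.s a' = Λ.r b') (hd : Λ.d a = Λ.d a')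
    (h : Λ.comp a b = Λ.comp a' b') : a = a' ∧ b = b' := by
  have hd2 : Λ.d b = Λ.d b' := by
    have h1 := Λ.d_comp hab
    have h2 := Λ.d_comp hab'
    rw [h, h2, hd] at h1
    exact (add_left_cancel h1).symm
  obtain ⟨P, _, huniq⟩ := Λ.factor (Λ.comp a b) (Λ.d a) (Λ.d b) (Λ.d_comp hab)
  have e1 := huniq (a, b) ⟨rfl, rfl, hab, rfl⟩
  have e2 := huniq (a', b') ⟨hd.symm, hd2.symm, hab', h.symm⟩
  have e := e1.trans e2.symm
  exact ⟨congrArg Prod.fst e, congrArg Prod.snd e⟩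

lemma factor₂ (Λ : KGraph k) (l : Λ.E) (m : Fin k → ℕ) (h : m ≤ Λ.d l) :
    ∃ a b, Λ.d a = m ∧ Λ.d b = Λ.d l - m ∧ Λ.s a = Λ.r b ∧ Λ.comp a b = l := by
  obtain ⟨P, hP, -⟩ := Λ.factor l m (Λ.d l - m) (by
    funext i
    have hi : m i ≤ Λ.d l i := h i
    simp only [Pi.add_apply, Pi.sub_apply]
    omega)
  exact ⟨P.1, P.2, hP.1, hP.2.1, hP.2.2.1, hP.2.2.2⟩

lemma seg_eq (Λ : KGraph k) {a b c : Λ.E} {p q : Fin k → ℕ}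
    (hda : Λ.d a = p) (hdb : Λ.d b = q - p)
    (hab : Λ.s a = Λ.r b) (hbc : Λ.s b = Λ.r c) :
    Λ.seg (Λ.comp a (Λ.comp b c)) p q = b := by
  have hex : ∃ t : Λ.E × Λ.E × Λ.E, Λ.d t.1 = p ∧ Λ.d t.2.1 = q - p ∧
      Λ.s t.1 = Λ.r t.2.1 ∧ Λ.s t.2.1 = Λ.r t.2.2 ∧
      Λ.comp t.1 (Λ.comp t.2.1 t.2.2) = Λ.comp a (Λ.comp b c) :=
    ⟨(a, b, c), hda, hdb, hab, hbc, rfl⟩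
  rw [seg, dif_pos hex]
  obtain ⟨h1, h2, h3, h4, h5⟩ := Classical.choose_spec hex
  set t := Classical.choose hex with ht
  have hst : Λ.s t.1 = Λ.r (Λ.comp t.2.1 t.2.2) := by rw [Λ.r_comp h4]; exact h3
  have hsa : Λ.s a = Λ.r (Λ.comp b c) := by rw [Λ.r_comp hbc]; exact hab
  obtain ⟨e1, e2⟩ := Λ.comp_unique hst hsa (by rw [h1, hda]) h5
  obtain ⟨e3, e4⟩ := Λ.comp_unique h4 hbc (by rw [h2, hdb]) e2
  exact e3

end KGraph

namespace KPFamily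

variable {A : Type} [Ring A] (f : KPFamily Λ A)

lemma S_eq_P {l : Λ.E} (h : Λ.d l = 0) : f.S l = f.P (Λ.r l) := by
  conv_lhs => rw [Λ.eq_ident_of_d_eq_zero l h]
  exact f.S_ident (Λ.r l)

lemma S'_eq_P {l : Λ.E} (h : Λ.d l = 0) : f.S' l = f.P (Λ.r l) := by
  conv_lhs => rw [Λ.eq_ident_of_d_eq_zero l h]
  exact f.S'_ident (Λ.r l)

lemma gP_mul_S (l : Λ.E) : f.P (Λ.r l) * f.S l = f.S l := by
  by_cases h : Λ.d l = 0
  · rw [f.S_eq_P h]; exact f.idem _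
  · exact f.P_mul_S l h

lemma gS_mul_P (l : Λ.E) : f.S l * f.P (Λ.s l) = f.S l := by
  by_cases h : Λ.d l = 0
  · rw [f.S_eq_P h, Λ.s_eq_r_of_d_eq_zero h]; exact f.idem _
  · exact f.S_mul_P l h

lemma gP_mul_S' (l : Λ.E) : f.P (Λ.s l) * f.S' l = f.S' l := by
  by_cases h : Λ.d l = 0
  · rw [f.S'_eq_P h, Λ.s_eq_r_of_d_eq_zero h]; exact f.idem _
  · exact f.P_mul_S' l h

lemma gS'_mul_P (l : Λ.E) : f.S' l * f.P (Λ.r l) = f.S' l := by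
  by_cases h : Λ.d l = 0
  · rw [f.S'_eq_P h]; exact f.idem _
  · exact f.S'_mul_P l h

lemma S_mul_P_of_ne (l : Λ.E) (w : Λ.V) (h : Λ.s l ≠ w) :
    f.S l * f.P w = 0 := by
  rw [← f.gS_mul_P l, mul_assoc, f.orth _ _ h, mul_zero]

lemma gmul_S {l m : Λ.E} (h : Λ.s l = Λ.r m) :
    f.S l * f.S m = f.S (Λ.comp l m) := by
  by_cases hl : Λ.d l = 0
  · have hr : Λ.r l = Λ.r m := by rw [← Λ.s_eq_r_of_d_eq_zero hl, h]
    have hcm : Λ.comp l m = m := by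
      conv_lhs => rw [Λ.eq_ident_of_d_eq_zero l hl, hr]
      exact Λ.ident_comp m
    rw [hcm, f.S_eq_P hl, hr]
    exact f.gP_mul_S m
  · by_cases hm : Λ.d m = 0
    · have hcm : Λ.comp l m = l := by
        conv_lhs => rw [Λ.eq_ident_of_d_eq_zero m hm, ← h]
        exact Λ.comp_ident l
      rw [hcm, f.S_eq_P hm, ← h]
      exact f.gS_mul_P l
    · exact f.mul_S hl hm h

lemma gmul_S' {l m : Λ.E} (h : Λ.s l = Λ.r m) :
    f.S' m * f.S' l = f.S' (Λ.comp l m) := by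
  by_cases hl : Λ.d l = 0
  · have hr : Λ.r l = Λ.r m := by rw [← Λ.s_eq_r_of_d_eq_zero hl, h]
    have hcm : Λ.comp l m = m := by
      conv_lhs => rw [Λ.eq_ident_of_d_eq_zero l hl, hr]
      exact Λ.ident_comp m
    rw [hcm, f.S'_eq_P hl, hr]
    exact f.gS'_mul_P m
  · by_cases hm : Λ.d m = 0
    · have hcm : Λ.comp l m = l := by
        conv_lhs => rw [Λ.eq_ident_of_d_eq_zero m hm, ← h]
        exact Λ.comp_ident l
      rw [hcm, f.S'_eq_P hm, ← h]
      exact f.gP_mul_S' l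
    · exact f.mul_S' hl hm h

lemma gKP3_self (l : Λ.E) : f.S' l * f.S l = f.P (Λ.s l) := by
  by_cases h : Λ.d l = 0
  · rw [f.S'_eq_P h, f.S_eq_P h, Λ.s_eq_r_of_d_eq_zero h]
    exact f.idem _
  · exact f.KP3_eq l h

lemma gKP3_ne (l m : Λ.E) (hd : Λ.d l = Λ.d m) (hne : l ≠ m) :
    f.S' l * f.S m = 0 := by
  by_cases h : Λ.d l = 0
  · have hm : Λ.d m = 0 := hd ▸ h
    have hrne : Λ.r l ≠ Λ.r m := by
      intro he
      apply hne
      rw [Λ.eq_ident_of_d_eq_zero l h, Λ.eq_ident_of_d_eq_zero m hm, he]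
    rw [f.S'_eq_P h, f.S_eq_P hm]
    exact f.orth _ _ hrne
  · exact f.KP3_ne l m h hd hne

lemma gKP4 (v : Λ.V) (n : Fin k → ℕ) (G : Finset Λ.E)
    (hG : ∀ l : Λ.E, l ∈ G ↔ Λ.r l = v ∧ Λ.d l = n) :
    f.P v = ∑ l ∈ G, f.S l * f.S' l := by
  by_cases hn : n = 0
  · have hGe : G = {Λ.ident v} := by
      ext l
      rw [hG l, Finset.mem_singleton]
      constructor
      · rintro ⟨h1, h2⟩
        rw [Λ.eq_ident_of_d_eq_zero l (hn ▸ h2), h1]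
      · rintro rfl
        exact ⟨Λ.r_ident v, hn ▸ Λ.d_ident v⟩
    rw [hGe, Finset.sum_singleton, f.S_ident, f.S'_ident]
    exact (f.idem v).symm
  · exact f.KP4 v n hn G hG

lemma mce_zero (hrf : Λ.RowFinite) (a b : Λ.E)
    (h : ∀ ξ ω : Λ.E, Λ.s a = Λ.r ξ → Λ.s b = Λ.r ω →
      Λ.d ξ = Λ.d a ⊔ Λ.d b - Λ.d a → Λ.d ω = Λ.d a ⊔ Λ.d b - Λ.d b →
      Λ.comp a ξ ≠ Λ.comp b ω) :
    f.S' a * f.S b = 0 := by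
  set N := Λ.d a ⊔ Λ.d b with hN
  set Fξ := (hrf (Λ.s a) (N - Λ.d a)).toFinset with hFξ
  set Fω := (hrf (Λ.s b) (N - Λ.d b)).toFinset with hFω
  have hmemξ : ∀ ξ, ξ ∈ Fξ ↔ Λ.r ξ = Λ.s a ∧ Λ.d ξ = N - Λ.d a := fun ξ => by
    rw [hFξ, Set.Finite.mem_toFinset]; rfl
  have hmemω : ∀ ω, ω ∈ Fω ↔ Λ.r ω = Λ.s b ∧ Λ.d ω = N - Λ.d b := fun ω => by
    rw [hFω, Set.Finite.mem_toFinset]; rfl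
  have hexpa : f.S' a = ∑ ξ ∈ Fξ, f.S ξ * f.S' (Λ.comp a ξ) := by
    conv_lhs => rw [← f.gP_mul_S' a, f.gKP4 (Λ.s a) (N - Λ.d a) Fξ hmemξ,
      Finset.sum_mul]
    refine Finset.sum_congr rfl fun ξ hξ => ?_
    rw [mul_assoc, f.gmul_S' ((hmemξ ξ).mp hξ).1.symm]
  have hexpb : f.S b = ∑ ω ∈ Fω, f.S (Λ.comp b ω) * f.S' ω := by
    conv_lhs => rw [← f.gS_mul_P b, f.gKP4 (Λ.s b) (N - Λ.d b) Fω hmemω,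
      Finset.mul_sum]
    refine Finset.sum_congr rfl fun ω hω => ?_
    rw [← mul_assoc, f.gmul_S ((hmemω ω).mp hω).1.symm]
  rw [hexpa, hexpb, Finset.sum_mul]
  refine Finset.sum_eq_zero fun ξ hξ => ?_
  rw [Finset.mul_sum]
  refine Finset.sum_eq_zero fun ω hω => ?_
  obtain ⟨hrξ, hdξ⟩ := (hmemξ ξ).mp hξ
  obtain ⟨hrω, hdω⟩ := (hmemω ω).mp hω
  have hda : Λ.d (Λ.comp a ξ) = N := by
    rw [Λ.d_comp hrξ.symm, hdξ]
    exact add_tsub_cancel_of_le le_sup_left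
  have hdb : Λ.d (Λ.comp b ω) = N := by
    rw [Λ.d_comp hrω.symm, hdω]
    exact add_tsub_cancel_of_le le_sup_right
  have hz : f.S' (Λ.comp a ξ) * f.S (Λ.comp b ω) = 0 :=
    f.gKP3_ne _ _ (hda.trans hdb.symm)
      (h ξ ω hrξ.symm hrω.symm hdξ hdω)
  calc f.S ξ * f.S' (Λ.comp a ξ) * (f.S (Λ.comp b ω) * f.S' ω)
      = f.S ξ * (f.S' (Λ.comp a ξ) * f.S (Λ.comp b ω)) * f.S' ω := by
        simp only [mul_assoc]
    _ = 0 := by rw [hz, mul_zero, zero_mul]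

lemma single_kill (hap : Λ.Aperiodic) (hrf : Λ.RowFinite)
    {μ ν : Λ.E} {v : Λ.V} (hμ : Λ.s μ = v) (hν : Λ.s ν = v)
    (hd : Λ.d μ ≠ Λ.d ν) :
    ∃ τ : Λ.E, Λ.r τ = v ∧ f.S' (Λ.comp μ τ) * f.S (Λ.comp ν τ) = 0 := by
  set m := Λ.d μ with hm
  set n := Λ.d ν with hn
  obtain ⟨l, hrl, hsup, hne⟩ := hap v m n hd
  have hml : Λ.s μ = Λ.r l := hμ.trans hrl.symm
  have hνl : Λ.s ν = Λ.r l := hν.trans hrl.symm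
  refine ⟨l, hrl, f.mce_zero hrf _ _ ?_⟩
  intro ξ ω hrξ hrω _ _ heq
  have hslξ : Λ.s l = Λ.r ξ := by rw [← Λ.s_comp hml]; exact hrξ
  have hslω : Λ.s l = Λ.r ω := by rw [← Λ.s_comp hνl]; exact hrω
  have hmle : m ≤ Λ.d l := le_trans le_sup_left hsup
  have hnle : n ≤ Λ.d l := le_trans le_sup_right hsup
  -- factorization of l with first factor of degree m
  obtain ⟨l₁, t, hdl₁, hdt, hst1, hct⟩ := Λ.factor₂ l m hmle
  have hsub1 : Λ.d l - m ⊔ n ≤ Λ.d t := by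
    rw [hdt]
    intro i
    have h1 : (m ⊔ n) i ≤ Λ.d l i := hsup i
    have h2 : m i ≤ (m ⊔ n) i := le_sup_left (α := ℕ)
    simp only [Pi.sub_apply]
    omega
  obtain ⟨l₂, l₃, hdl₂, hdl₃, hs23, hc23⟩ := Λ.factor₂ t (Λ.d l - m ⊔ n) hsub1
  have hfac : Λ.comp l₁ (Λ.comp l₂ l₃) = l := by rw [hc23]; exact hct
  have hrt : Λ.r t = Λ.r l₂ := by rw [← hc23]; exact Λ.r_comp hs23
  have hslt : Λ.s l = Λ.s t := by rw [← hct, Λ.s_comp hst1]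
  have hsl3 : Λ.s l = Λ.s l₃ := by rw [hslt, ← hc23, Λ.s_comp hs23]
  have hrl1 : Λ.r l = Λ.r l₁ := by rw [← hct]; exact Λ.r_comp hst1
  -- factorization of l with first factor of degree n
  obtain ⟨l₁', t', hdl₁', hdt', hst1', hct'⟩ := Λ.factor₂ l n hnle
  have hsub1' : Λ.d l - m ⊔ n ≤ Λ.d t' := by
    rw [hdt']
    intro i
    have h1 : (m ⊔ n) i ≤ Λ.d l i := hsup i
    have h2 : n i ≤ (m ⊔ n) i := le_sup_right (α := ℕ)
    simp only [Pi.sub_apply]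
    omega
  obtain ⟨l₂', l₃', hdl₂', hdl₃', hs23', hc23'⟩ := Λ.factor₂ t' (Λ.d l - m ⊔ n) hsub1'
  have hfac' : Λ.comp l₁' (Λ.comp l₂' l₃') = l := by rw [hc23']; exact hct'
  have hrt' : Λ.r t' = Λ.r l₂' := by rw [← hc23']; exact Λ.r_comp hs23'
  have hslt' : Λ.s l = Λ.s t' := by rw [← hct', Λ.s_comp hst1']
  have hsl3' : Λ.s l = Λ.s l₃' := by rw [hslt', ← hc23', Λ.s_comp hs23']
  have hrl1' : Λ.r l = Λ.r l₁' := by rw [← hct']; exact Λ.r_comp hst1'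
  -- the two aperiodicity segments
  have hseg1 : Λ.seg l m (m + Λ.d l - m ⊔ n) = l₂ := by
    have hdb : Λ.d l₂ = (m + Λ.d l - m ⊔ n) - m := by
      rw [hdl₂]
      funext i
      have h1 : (m ⊔ n) i ≤ Λ.d l i := hsup i
      have h2 : m i ≤ (m ⊔ n) i := le_sup_left (α := ℕ)
      simp only [Pi.sub_apply, Pi.add_apply]
      omega
    have h0 := Λ.seg_eq hdl₁ hdb (hst1.trans hrt) hs23
    rwa [hfac] at h0
  have hseg1' : Λ.seg l n (n + Λ.d l - m ⊔ n) = l₂' := by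
    have hdb : Λ.d l₂' = (n + Λ.d l - m ⊔ n) - n := by
      rw [hdl₂']
      funext i
      have h1 : (m ⊔ n) i ≤ Λ.d l i := hsup i
      have h2 : n i ≤ (m ⊔ n) i := le_sup_right (α := ℕ)
      simp only [Pi.sub_apply, Pi.add_apply]
      omega
    have h0 := Λ.seg_eq hdl₁' hdb (hst1'.trans hrt') hs23'
    rwa [hfac'] at h0
  -- μ-side description of ρ
  have hsl3ξ' : Λ.s l₃' = Λ.r ξ := by rw [← hsl3']; exact hslξ
  have hs2X' : Λ.s l₂' = Λ.r (Λ.comp l₃' ξ) := by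
    rw [Λ.r_comp hsl3ξ']; exact hs23'
  have hμ1' : Λ.s μ = Λ.r l₁' := hml.trans hrl1'
  have hρμ : Λ.comp (Λ.comp μ l) ξ
      = Λ.comp (Λ.comp μ l₁') (Λ.comp l₂' (Λ.comp l₃' ξ)) := by
    calc Λ.comp (Λ.comp μ l) ξ = Λ.comp μ (Λ.comp l ξ) := Λ.comp_assoc hml hslξ
      _ = Λ.comp μ (Λ.comp l₁' (Λ.comp (Λ.comp l₂' l₃') ξ)) := by
          rw [← hfac', Λ.comp_assoc (by rw [hc23']; exact hst1')
            (by rw [hc23', ← hslt']; exact hslξ)]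
      _ = Λ.comp μ (Λ.comp l₁' (Λ.comp l₂' (Λ.comp l₃' ξ))) := by
          rw [Λ.comp_assoc hs23' hsl3ξ']
      _ = Λ.comp (Λ.comp μ l₁') (Λ.comp l₂' (Λ.comp l₃' ξ)) := by
          rw [Λ.comp_assoc hμ1' (by rw [Λ.r_comp hs2X']; exact hst1'.trans hrt')]
  have hsegρμ : Λ.seg (Λ.comp (Λ.comp μ l) ξ) (m + n) (m + n + (Λ.d l - m ⊔ n))
      = l₂' := by
    rw [hρμ]
    refine Λ.seg_eq ?_ ?_ ?_ hs2X'
    · rw [Λ.d_comp hμ1', hdl₁']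
    · rw [hdl₂']
      funext i
      simp only [Pi.sub_apply, Pi.add_apply]
      omega
    · rw [Λ.s_comp hμ1']; exact hst1'.trans hrt'
  -- ν-side description of ρ
  have hsl3ω : Λ.s l₃ = Λ.r ω := by rw [← hsl3]; exact hslω
  have hs2X : Λ.s l₂ = Λ.r (Λ.comp l₃ ω) := by
    rw [Λ.r_comp hsl3ω]; exact hs23
  have hν1 : Λ.s ν = Λ.r l₁ := hνl.trans hrl1
  have hρν : Λ.comp (Λ.comp ν l) ω
      = Λ.comp (Λ.comp ν l₁) (Λ.comp l₂ (Λ.comp l₃ ω)) := by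
    calc Λ.comp (Λ.comp ν l) ω = Λ.comp ν (Λ.comp l ω) := Λ.comp_assoc hνl hslω
      _ = Λ.comp ν (Λ.comp l₁ (Λ.comp (Λ.comp l₂ l₃) ω)) := by
          rw [← hfac, Λ.comp_assoc (by rw [hc23]; exact hst1)
            (by rw [hc23, ← hslt]; exact hslω)]
      _ = Λ.comp ν (Λ.comp l₁ (Λ.comp l₂ (Λ.comp l₃ ω))) := by
          rw [Λ.comp_assoc hs23 hsl3ω]
      _ = Λ.comp (Λ.comp ν l₁) (Λ.comp l₂ (Λ.comp l₃ ω)) := by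
          rw [Λ.comp_assoc hν1 (by rw [Λ.r_comp hs2X]; exact hst1.trans hrt)]
  have hsegρν : Λ.seg (Λ.comp (Λ.comp ν l) ω) (m + n) (m + n + (Λ.d l - m ⊔ n))
      = l₂ := by
    rw [hρν]
    refine Λ.seg_eq ?_ ?_ ?_ hs2X
    · rw [Λ.d_comp hν1, hdl₁, add_comm]
    · rw [hdl₂]
      funext i
      simp only [Pi.sub_apply, Pi.add_apply]
      omega
    · rw [Λ.s_comp hν1]; exact hst1.trans hrt
  apply hne
  rw [hseg1, hseg1', ← hsegρν, ← heq, hsegρμ]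

lemma kill (hap : Λ.Aperiodic) (hrf : Λ.RowFinite) :
    ∀ (N : ℕ) (G : Finset (Λ.E × Λ.E)), G.card ≤ N → ∀ v : Λ.V,
    (∀ q ∈ G, Λ.s q.1 = v ∧ Λ.s q.2 = v ∧ Λ.d q.1 ≠ Λ.d q.2) →
    ∃ τ : Λ.E, Λ.r τ = v ∧
      ∀ q ∈ G, f.S' (Λ.comp q.1 τ) * f.S (Λ.comp q.2 τ) = 0 := by
  intro N
  induction N with
  | zero =>
    intro G hG v _
    have hGe : G = ∅ := Finset.card_eq_zero.mp (Nat.le_zero.mp hG)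
    exact ⟨Λ.ident v, Λ.r_ident v, fun q hq => absurd (hGe ▸ hq) (Finset.notMem_empty q)⟩
  | succ N ih =>
    intro G hG v hv
    classical
    rcases G.eq_empty_or_nonempty with hGe | ⟨q, hq⟩
    · exact ⟨Λ.ident v, Λ.r_ident v, fun q hq => absurd (hGe ▸ hq) (Finset.notMem_empty q)⟩
    obtain ⟨hs1, hs2, hd12⟩ := hv q hq
    obtain ⟨τ₀, hrτ₀, hτ₀⟩ := f.single_kill hap hrf hs1 hs2 hd12
    set G' := (G.erase q).image (fun q' => (Λ.comp q'.1 τ₀, Λ.comp q'.2 τ₀)) with hG'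
    have hcard : G'.card ≤ N := by
      calc G'.card ≤ (G.erase q).card := Finset.card_image_le
        _ ≤ N := by
          have := Finset.card_erase_of_mem hq
          omega
    have hv' : ∀ q'' ∈ G', Λ.s q''.1 = Λ.s τ₀ ∧ Λ.s q''.2 = Λ.s τ₀ ∧
        Λ.d q''.1 ≠ Λ.d q''.2 := by
      intro q'' hq''
      obtain ⟨q', hq', rfl⟩ := Finset.mem_image.mp hq''
      obtain ⟨h1, h2, h3⟩ := hv q' (Finset.mem_of_mem_erase hq')
      refine ⟨Λ.s_comp (h1.trans hrτ₀.symm), Λ.s_comp (h2.trans hrτ₀.symm), ?_⟩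
      rw [Λ.d_comp (h1.trans hrτ₀.symm), Λ.d_comp (h2.trans hrτ₀.symm)]
      intro he
      exact h3 (add_right_cancel he)
    obtain ⟨τ₁, hrτ₁, hτ₁⟩ := ih G' hcard (Λ.s τ₀) hv'
    refine ⟨Λ.comp τ₀ τ₁, by rw [Λ.r_comp hrτ₁.symm]; exact hrτ₀, ?_⟩
    intro q' hq'
    obtain ⟨h1, h2, _⟩ := hv q' hq'
    have ha1 : Λ.comp q'.1 (Λ.comp τ₀ τ₁)
        = Λ.comp (Λ.comp q'.1 τ₀) τ₁ :=
      (Λ.comp_assoc (h1.trans hrτ₀.symm) hrτ₁.symm).symm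
    have ha2 : Λ.comp q'.2 (Λ.comp τ₀ τ₁)
        = Λ.comp (Λ.comp q'.2 τ₀) τ₁ :=
      (Λ.comp_assoc (h2.trans hrτ₀.symm) hrτ₁.symm).symm
    have hsc1 : Λ.s (Λ.comp q'.1 τ₀) = Λ.r τ₁ := by
      rw [Λ.s_comp (h1.trans hrτ₀.symm)]; exact hrτ₁.symm
    have hsc2 : Λ.s (Λ.comp q'.2 τ₀) = Λ.r τ₁ := by
      rw [Λ.s_comp (h2.trans hrτ₀.symm)]; exact hrτ₁.symm
    by_cases hqq : q' = q
    · subst hqq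
      rw [ha1, ha2, ← f.gmul_S' hsc1, ← f.gmul_S hsc2]
      calc f.S' τ₁ * f.S' (Λ.comp q'.1 τ₀) * (f.S (Λ.comp q'.2 τ₀) * f.S τ₁)
          = f.S' τ₁ * (f.S' (Λ.comp q'.1 τ₀) * f.S (Λ.comp q'.2 τ₀)) * f.S τ₁ := by
            simp only [mul_assoc]
        _ = 0 := by rw [hτ₀, mul_zero, zero_mul]
    · have hmem : (Λ.comp q'.1 τ₀, Λ.comp q'.2 τ₀) ∈ G' :=
        Finset.mem_image_of_mem _ (Finset.mem_erase.mpr ⟨hqq, hq'⟩)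
      have h0 := hτ₁ _ hmem
      rw [ha1, ha2]
      exact h0

end KPFamily

end Aux

/-- **Proposition 4.9.**  Let `Λ` be an aperiodic row-finite `k`-graph without
sources and let `x = Σ_{(a,b) ∈ F} c_{a,b} • s_a s_{b*}` be a nonzero element
of `KP_R(Λ)` in normal form.  Then there exist `σ, τ ∈ Λ`, `(δ,γ) ∈ F` and a
vertex `w ∈ Λ^0` such that `s_{σ*} x s_τ = c_{δ,γ} • p_w`. -/
theorem exists_compress_to_vertex (k : ℕ) (hk : 0 < k) (Λ : KGraph k)
    (hap : Λ.Aperiodic) (hrf : Λ.RowFinite) (hns : Λ.NoSources)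
    (R : Type) [CommRing R] (A : Type) [Ring A] [Algebra R A]
    (KP : KPAlgebra Λ R A) (x : A) (hx : x ≠ 0)
    (F : Finset (Λ.E × Λ.E)) (c : Λ.E × Λ.E → R) (n : Fin k → ℕ)
    (hsum : x = ∑ p ∈ F, c p • (KP.fam.S p.1 * KP.fam.S' p.2))
    (hc : ∀ p ∈ F, c p ≠ 0) (hdeg : ∀ p ∈ F, Λ.d p.2 = n) :
    ∃ (σ τ : Λ.E), ∃ p ∈ F, ∃ w : Λ.V,
      KP.fam.S' σ * x * KP.fam.S τ = c p • KP.fam.P w := by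
  classical
  set f := KP.fam with hfdef
  -- multiplying on the right by a generator of degree n
  have hxS : ∀ β : Λ.E, Λ.d β = n →
      x * f.S β = ∑ p ∈ F.filter (fun p => p.2 = β),
        c p • (f.S p.1 * f.P (Λ.s β)) := by
    intro β hβ
    rw [hsum, Finset.sum_mul, Finset.sum_filter]
    refine Finset.sum_congr rfl fun p hp => ?_
    rw [smul_mul_assoc, mul_assoc]
    by_cases he : p.2 = β
    · rw [if_pos he, he, f.gKP3_self β]
    · rw [if_neg he, f.gKP3_ne p.2 β ((hdeg p hp).trans hβ.symm) he, mul_zero,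
        smul_zero]
  -- x is recovered from the products x * s_β
  have hrepr : x = ∑ β ∈ F.image Prod.snd, (x * f.S β) * f.S' β := by
    have hterm : ∀ β ∈ F.image Prod.snd, (x * f.S β) * f.S' β
        = ∑ p ∈ F.filter (fun p => p.2 = β), c p • (f.S p.1 * f.S' p.2) := by
      intro β hβ
      obtain ⟨p₀, hp₀, hp₀e⟩ := Finset.mem_image.mp hβ
      rw [hxS β (hp₀e ▸ hdeg p₀ hp₀), Finset.sum_mul]
      refine Finset.sum_congr rfl fun p hp => ?_
      have he : p.2 = β := by
        simpa using (Finset.mem_filter.mp hp).2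
      rw [smul_mul_assoc, mul_assoc, ← he, f.gP_mul_S' p.2]
    rw [Finset.sum_congr rfl hterm, hsum]
    exact (Finset.sum_fiberwise_of_maps_to
      (fun p hp => Finset.mem_image_of_mem Prod.snd hp) _).symm
  -- choose γ with x * s_γ ≠ 0
  have hexγ : ∃ β ∈ F.image Prod.snd, x * f.S β ≠ 0 := by
    by_contra hcon
    push_neg at hcon
    apply hx
    rw [hrepr]
    exact Finset.sum_eq_zero fun β hβ => by rw [hcon β hβ, zero_mul]
  obtain ⟨γ, hγB, hyne⟩ := hexγ
  obtain ⟨pγ, hpγ, hpγe⟩ := Finset.mem_image.mp hγB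
  have hdγ : Λ.d γ = n := hpγe ▸ hdeg pγ hpγ
  -- the nonzero sum y = x * s_γ over T
  have hy : x * f.S γ = ∑ p ∈ F.filter (fun p => p.2 = γ ∧ Λ.s p.1 = Λ.s γ),
      c p • f.S p.1 := by
    rw [hxS γ hdγ, ← Finset.filter_filter, Finset.sum_filter
      (s := F.filter (fun p => p.2 = γ)) (p := fun p => Λ.s p.1 = Λ.s γ)]
    refine Finset.sum_congr rfl fun p hp => ?_
    by_cases hs : Λ.s p.1 = Λ.s γ
    · rw [if_pos hs, ← hs, f.gS_mul_P p.1]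
    · rw [if_neg hs, f.S_mul_P_of_ne p.1 (Λ.s γ) hs, smul_zero]
  set T := F.filter (fun p => p.2 = γ ∧ Λ.s p.1 = Λ.s γ) with hTdef
  have hTne : T.Nonempty := by
    by_contra hTe
    rw [Finset.not_nonempty_iff_eq_empty] at hTe
    exact hyne (by rw [hy, hTe, Finset.sum_empty])
  obtain ⟨dp, hdp⟩ := hTne
  have hdpF : dp ∈ F := (Finset.mem_filter.mp hdp).1
  have hdp2 : dp.2 = γ := (Finset.mem_filter.mp hdp).2.1
  have hdps : Λ.s dp.1 = Λ.s γ := (Finset.mem_filter.mp hdp).2.2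
  -- apply the killing lemma
  set G := ((T.erase dp).filter (fun p => Λ.d p.1 ≠ Λ.d dp.1)).image
    (fun p => (dp.1, p.1)) with hGdef
  have hGcond : ∀ q ∈ G, Λ.s q.1 = Λ.s γ ∧ Λ.s q.2 = Λ.s γ ∧
      Λ.d q.1 ≠ Λ.d q.2 := by
    intro q hq
    obtain ⟨p, hp, rfl⟩ := Finset.mem_image.mp hq
    obtain ⟨hpe, hpd⟩ := Finset.mem_filter.mp hp
    have hpT := Finset.mem_of_mem_erase hpe
    exact ⟨hdps, (Finset.mem_filter.mp hpT).2.2, fun he => hpd he.symm⟩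
  obtain ⟨τ, hrτ, hτ⟩ := f.kill hap hrf G.card G le_rfl (Λ.s γ) hGcond
  have hsγτ : Λ.s γ = Λ.r τ := hrτ.symm
  have hsδτ : Λ.s dp.1 = Λ.r τ := hdps.trans hrτ.symm
  refine ⟨Λ.comp dp.1 τ, Λ.comp γ τ, dp, hdpF, Λ.s τ, ?_⟩
  rw [← f.gmul_S' hsδτ, ← f.gmul_S hsγτ]
  have hassoc : f.S' τ * f.S' dp.1 * x * (f.S γ * f.S τ)
      = f.S' τ * ((f.S' dp.1 * (x * f.S γ)) * f.S τ) := by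
    simp only [mul_assoc]
  rw [hassoc, hy]
  have hsum2 : f.S' τ * ((f.S' dp.1 * (∑ p ∈ T, c p • f.S p.1)) * f.S τ)
      = ∑ p ∈ T, c p • (f.S' (Λ.comp dp.1 τ) * f.S (Λ.comp p.1 τ)) := by
    rw [Finset.mul_sum, Finset.sum_mul, Finset.mul_sum]
    refine Finset.sum_congr rfl fun p hp => ?_
    have hsp : Λ.s p.1 = Λ.r τ :=
      ((Finset.mem_filter.mp hp).2.2).trans hrτ.symm
    rw [mul_smul_comm, smul_mul_assoc, mul_smul_comm]
    congr 1
    rw [← f.gmul_S' hsδτ, ← f.gmul_S hsp]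
    simp only [mul_assoc]
  rw [hsum2]
  rw [Finset.sum_eq_single dp]
  · rw [f.gKP3_self (Λ.comp dp.1 τ), Λ.s_comp hsδτ]
  · intro p hp hpne
    have hsp : Λ.s p.1 = Λ.r τ :=
      ((Finset.mem_filter.mp hp).2.2).trans hrτ.symm
    by_cases hdd : Λ.d p.1 = Λ.d dp.1
    · have hcne : Λ.comp dp.1 τ ≠ Λ.comp p.1 τ := by
        intro he
        have h1 := (Λ.comp_unique hsδτ hsp hdd.symm he).1
        apply hpne
        apply Prod.ext h1.symm
        rw [(Finset.mem_filter.mp hp).2.1, hdp2]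
      rw [f.gKP3_ne _ _ (by rw [Λ.d_comp hsδτ, Λ.d_comp hsp, hdd]) hcne,
        smul_zero]
    · have hmem : (dp.1, p.1) ∈ G :=
        Finset.mem_image_of_mem _ (Finset.mem_filter.mpr
          ⟨Finset.mem_erase.mpr ⟨hpne, hp⟩, hdd⟩)
      rw [hτ _ hmem, smul_zero]
  · intro hdp'
    exact absurd hdp hdp'

end KP
end
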